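/- Let f : ℝ^n → ℝ be three times continuously differentiable on the open ball of radius r > 0 centered at x ∈ ℝ^n, and suppose the third derivative satisfies ‖D³f(y)‖ ≤ B (operator norm) for all y in this ball. Then for every c > 0 with c·√n < r, the Euclidean norm of the difference between the average over all ξ ∈ {-1,1}^n of [(f(x+cξ) − f(x−cξ))/(2c)]·ξ and the gradient ∇f(x) is at most (B·n²/6)·c². In particular the bias of the simultaneous-perturbation gradient approximation is O(c²) as c → 0. -/

import Mathlib

/-- The ±1 vector in Euclidean `ℝ^n` associated with a Boolean sign pattern. -/
def pmE (n : ℕ) (ε : Fin n → Bool) : EuclideanSpace ℝ (Fin n) :=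
  WithLp.toLp 2 fun i => if ε i then 1 else -1

lemma pmE_sq (n : ℕ) (ε : Fin n → Bool) (i : Fin n) : pmE n ε i ^ 2 = 1 := by
  by_cases h : ε i <;> simp [pmE, h]

lemma pmE_norm (n : ℕ) (ε : Fin n → Bool) : ‖pmE n ε‖ = Real.sqrt n := by
  rw [EuclideanSpace.norm_eq]
  have : ∀ i, ‖pmE n ε i‖ ^ 2 = 1 := fun i => by by_cases h : ε i <;> simp [pmE, h]
  simp [pmE_sq]

lemma sum_sign_mul (n : ℕ) (i j : Fin n) :
    ∑ ε : Fin n → Bool, pmE n ε i * pmE n ε j = if i = j then (2:ℝ)^n else 0 := by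
  rcases eq_or_ne i j with rfl | hij
  · simp only [if_pos rfl, ← sq]
    simp [pmE_sq, Finset.card_univ]
  · rw [if_neg hij]
    classical
    apply Finset.sum_ninvolution (g := fun ε => Function.update ε i (!(ε i)))
    · intro ε
      by_cases h : ε i <;> by_cases h2 : ε j <;>
        simp [pmE, Function.update_of_ne (Ne.symm hij), h, h2]
    · intro ε _ hcon
      have := congrFun hcon i; simp at this
    · intro ε; exact Finset.mem_univ _
    · intro ε; funext k
      by_cases hk : k = i
      · subst hk; simp
      · simp [Function.update_of_ne hk]

lemma avg_recon (n : ℕ) (g : EuclideanSpace ℝ (Fin n)) :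
    ((2:ℝ)^n)⁻¹ • ∑ ε : Fin n → Bool, (inner ℝ g (pmE n ε) : ℝ) • pmE n ε = g := by
  ext i
  rw [PiLp.smul_apply, smul_eq_mul,
    show (∑ ε : Fin n → Bool, (inner ℝ g (pmE n ε) : ℝ) • pmE n ε) i
      = ∑ ε : Fin n → Bool, ((inner ℝ g (pmE n ε) : ℝ) • pmE n ε) i
      from by rw [WithLp.ofLp_sum, Finset.sum_apply]]
  simp_rw [PiLp.smul_apply, smul_eq_mul, PiLp.inner_apply, RCLike.inner_apply', conj_trivial]
  have key : ∑ ε : Fin n → Bool, (∑ j, g j * pmE n ε j) * pmE n ε i = 2^n * g i := by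
    simp_rw [Finset.sum_mul, mul_assoc]
    rw [Finset.sum_comm]
    simp_rw [← Finset.mul_sum, sum_sign_mul]
    simp [Finset.sum_ite_eq]
    ring
  rw [key, ← mul_assoc, inv_mul_cancel₀ (by positivity), one_mul]

section Analysis
open Metric Set

variable {E : Type*} [NormedAddCommGroup E] [NormedSpace ℝ E]

/-- Quadratic approximation of the first derivative under a third-derivative bound. -/
lemma quad_bound (f : E → ℝ) (x : E) (r B : ℝ)
    (hf : ContDiffOn ℝ 3 f (ball x r))
    (hB : ∀ y ∈ ball x r, ‖iteratedFDeriv ℝ 3 f y‖ ≤ B)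
    (u : E) (hu : ‖u‖ < r) :
    ‖fderiv ℝ f (x + u) - fderiv ℝ f x - fderiv ℝ (fderiv ℝ f) x u‖ ≤ B / 2 * ‖u‖ ^ 2 := by
  set s := ball x r with hs
  have hso : IsOpen s := isOpen_ball
  have hca : ∀ y ∈ s, ContDiffAt ℝ 3 f y := fun y hy => hf.contDiffAt (hso.mem_nhds hy)
  set F := fderiv ℝ f with hF
  set G := fderiv ℝ F with hG
  have hFd : ∀ y ∈ s, DifferentiableAt ℝ F y := fun y hy =>
    ((hca y hy).fderiv_right (m := 2) (by norm_num)).differentiableAt (by norm_num)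
  have hGd : ∀ y ∈ s, DifferentiableAt ℝ G y := fun y hy =>
    (((hca y hy).fderiv_right (m := 2) (by norm_num)).fderiv_right (m := 1)
      (by norm_num)).differentiableAt (by norm_num)
  letI : NormedAddCommGroup (E →L[ℝ] E →L[ℝ] ℝ) := inferInstance
  letI : NormedSpace ℝ (E →L[ℝ] E →L[ℝ] ℝ) := inferInstance
  have hG3 : ∀ y ∈ s, ‖fderiv ℝ G y‖ ≤ B := by
    intro y hy
    have e1 : ‖fderiv ℝ G y‖ = ‖iteratedFDeriv ℝ 0 (fderiv ℝ G) y‖ :=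
      (norm_iteratedFDeriv_zero).symm
    rw [e1, norm_iteratedFDeriv_fderiv, norm_iteratedFDeriv_fderiv,
      norm_iteratedFDeriv_fderiv]
    exact hB y hy
  have hGlip : ∀ y ∈ s, ∀ z ∈ s, ‖G y - G z‖ ≤ B * ‖y - z‖ := fun y hy z hz =>
    (convex_ball x r).norm_image_sub_le_of_norm_fderiv_le hGd hG3 hz hy
  -- the auxiliary curve
  set Φ : ℝ → (E →L[ℝ] ℝ) := fun t => F (x + t • u) - F x - t • (G x u) with hΦ
  have hmem : ∀ t ∈ Icc (0:ℝ) 1, x + t • u ∈ s := by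
    intro t ht
    rw [hs, mem_ball, dist_eq_norm, add_sub_cancel_left, norm_smul, Real.norm_eq_abs,
      abs_of_nonneg ht.1]
    calc t * ‖u‖ ≤ 1 * ‖u‖ := by
          apply mul_le_mul_of_nonneg_right ht.2 (norm_nonneg u)
      _ < r := by rwa [one_mul]
  have hderiv : ∀ t ∈ Icc (0:ℝ) 1, HasDerivAt Φ (G (x + t • u) u - G x u) t := by
    intro t ht
    have hline : HasDerivAt (fun t : ℝ => x + t • u) u t := by
      simpa using ((hasDerivAt_id t).smul_const u).const_add x
    have p1 : HasDerivAt (fun t : ℝ => F (x + t • u)) (G (x + t • u) u) t := by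
      have := ((hFd _ (hmem t ht)).hasFDerivAt).comp_hasDerivAt t hline
      exact this
    have p2 : HasDerivAt (fun t : ℝ => F x + t • (G x u)) (G x u) t := by
      simpa using ((hasDerivAt_id t).smul_const (G x u)).const_add (F x)
    have := p1.sub p2
    exact this.congr_of_eventuallyEq (Filter.Eventually.of_forall fun s => by simp [hΦ, sub_sub])
  have hx0 : x ∈ s := by simpa [hs] using lt_of_le_of_lt (norm_nonneg u) hu
  have hB0 : 0 ≤ B := le_trans (norm_nonneg _) (hB x hx0)
  have bound := image_norm_le_of_norm_deriv_right_le_deriv_boundary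
    (f := Φ) (f' := fun t => G (x + t • u) u - G x u)
    (a := 0) (b := 1)
    (fun t ht => (hderiv t ht).continuousAt.continuousWithinAt)
    (fun t ht => (hderiv t (Ico_subset_Icc_self ht)).hasDerivWithinAt)
    (B := fun t => B * ‖u‖ ^ 2 / 2 * t ^ 2) (B' := fun t => B * ‖u‖ ^ 2 * t)
    (by simp [hΦ])
    (fun t => by
      have := (hasDerivAt_pow 2 t).const_mul (B * ‖u‖ ^ 2 / 2)
      exact this.congr_deriv (by ring))
    (fun t ht => by
      have h1 : ‖G (x + t • u) u - G x u‖ ≤ ‖G (x + t • u) - G x‖ * ‖u‖ := by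
        rw [← ContinuousLinearMap.sub_apply]
        exact ContinuousLinearMap.le_opNorm _ u
      have h2 : ‖G (x + t • u) - G x‖ ≤ B * (t * ‖u‖) := by
        have := hGlip _ (hmem t (Ico_subset_Icc_self ht)) x hx0
        simpa [norm_smul, Real.norm_eq_abs, abs_of_nonneg ht.1] using this
      calc ‖G (x + t • u) u - G x u‖ ≤ B * (t * ‖u‖) * ‖u‖ :=
            h1.trans (mul_le_mul_of_nonneg_right h2 (norm_nonneg u))
        _ = B * ‖u‖ ^ 2 * t := by ring)
  have h := bound (right_mem_Icc.mpr zero_le_one)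
  rw [show B / 2 * ‖u‖ ^ 2 = B * ‖u‖ ^ 2 / 2 * 1 ^ 2 by ring]
  simpa [hΦ] using h

/-- Symmetric-difference third-order Taylor bound. -/
lemma cube_bound (f : E → ℝ) (x : E) (r B : ℝ)
    (hf : ContDiffOn ℝ 3 f (ball x r))
    (hB : ∀ y ∈ ball x r, ‖iteratedFDeriv ℝ 3 f y‖ ≤ B)
    (h : E) (hh : ‖h‖ < r) :
    |f (x + h) - f (x - h) - 2 * fderiv ℝ f x h| ≤ B / 3 * ‖h‖ ^ 3 := by
  set s := ball x r with hs
  have hso : IsOpen s := isOpen_ball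
  have hca : ∀ y ∈ s, ContDiffAt ℝ 3 f y := fun y hy => hf.contDiffAt (hso.mem_nhds hy)
  have hfd : ∀ y ∈ s, DifferentiableAt ℝ f y := fun y hy =>
    (hca y hy).differentiableAt (by norm_num)
  set F := fderiv ℝ f with hF
  set G := fderiv ℝ F with hG
  have hmem : ∀ t ∈ Set.Icc (0:ℝ) 1, ‖t • h‖ < r := by
    intro t ht
    rw [norm_smul, Real.norm_eq_abs, abs_of_nonneg ht.1]
    calc t * ‖h‖ ≤ 1 * ‖h‖ := mul_le_mul_of_nonneg_right ht.2 (norm_nonneg h)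
      _ < r := by rwa [one_mul]
  have hmemp : ∀ t ∈ Set.Icc (0:ℝ) 1, x + t • h ∈ s := fun t ht => by
    rw [hs, mem_ball, dist_eq_norm, add_sub_cancel_left]; exact hmem t ht
  have hmemm : ∀ t ∈ Set.Icc (0:ℝ) 1, x - t • h ∈ s := fun t ht => by
    rw [hs, mem_ball, dist_eq_norm, sub_sub_cancel_left, norm_neg]; exact hmem t ht
  set Ψ : ℝ → ℝ := fun t => f (x + t • h) - f (x - t • h) - (2 * t) * (F x h) with hΨ
  set D : ℝ → ℝ := fun t => F (x + t • h) h + F (x - t • h) h - 2 * (F x h) with hD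
  have hderiv : ∀ t ∈ Set.Icc (0:ℝ) 1, HasDerivAt Ψ (D t) t := by
    intro t ht
    have hlinep : HasDerivAt (fun t : ℝ => x + t • h) h t := by
      simpa using ((hasDerivAt_id t).smul_const h).const_add x
    have hlinem : HasDerivAt (fun t : ℝ => x - t • h) (-h) t := by
      simpa using ((hasDerivAt_id t).smul_const h).const_sub x
    have p1 : HasDerivAt (fun t : ℝ => f (x + t • h)) (F (x + t • h) h) t :=
      ((hfd _ (hmemp t ht)).hasFDerivAt).comp_hasDerivAt t hlinep
    have p2 : HasDerivAt (fun t : ℝ => f (x - t • h)) (F (x - t • h) (-h)) t :=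
      ((hfd _ (hmemm t ht)).hasFDerivAt).comp_hasDerivAt t hlinem
    have p3 : HasDerivAt (fun t : ℝ => (2 * t) * (F x h)) (2 * (F x h)) t := by
      simpa using ((hasDerivAt_id t).const_mul 2).mul_const (F x h)
    have := (p1.sub p2).sub p3
    have e : F (x + t • h) h - F (x - t • h) (-h) - 2 * (F x h) = D t := by
      simp [hD, map_neg]
      try ring
    rw [← e]; exact this
  have hbd : ∀ t ∈ Set.Ico (0:ℝ) 1, ‖D t‖ ≤ B * ‖h‖ ^ 3 * t ^ 2 := by
    intro t ht
    have ht' : t ∈ Set.Icc (0:ℝ) 1 := Set.Ico_subset_Icc_self ht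
    have hA1 : ‖F (x + t • h) - F x - G x (t • h)‖ ≤ B / 2 * ‖t • h‖ ^ 2 :=
      quad_bound f x r B hf hB (t • h) (hmem t ht')
    have hA2 : ‖F (x - t • h) - F x - G x (-(t • h))‖ ≤ B / 2 * ‖t • h‖ ^ 2 := by
      have := quad_bound f x r B hf hB (-(t • h)) (by rw [norm_neg]; exact hmem t ht')
      rw [← sub_eq_add_neg] at this
      simpa [norm_neg] using this
    have key : D t = (F (x + t • h) - F x - G x (t • h)) h
        + (F (x - t • h) - F x - G x (-(t • h))) h := by
      simp [hD, ContinuousLinearMap.sub_apply, map_neg]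
      ring
    rw [Real.norm_eq_abs, key]
    have b1 : |(F (x + t • h) - F x - G x (t • h)) h| ≤ B / 2 * ‖t • h‖ ^ 2 * ‖h‖ :=
      (ContinuousLinearMap.le_opNorm _ h).trans
        (mul_le_mul_of_nonneg_right hA1 (norm_nonneg h))
    have b2 : |(F (x - t • h) - F x - G x (-(t • h))) h| ≤ B / 2 * ‖t • h‖ ^ 2 * ‖h‖ :=
      (ContinuousLinearMap.le_opNorm _ h).trans
        (mul_le_mul_of_nonneg_right hA2 (norm_nonneg h))
    have := (abs_add_le _ _).trans (add_le_add b1 b2)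
    have e : B / 2 * ‖t • h‖ ^ 2 * ‖h‖ + B / 2 * ‖t • h‖ ^ 2 * ‖h‖ = B * ‖h‖ ^ 3 * t ^ 2 := by
      rw [norm_smul, Real.norm_eq_abs, abs_of_nonneg ht.1]
      ring
    rw [e] at this
    exact this
  have bound := image_norm_le_of_norm_deriv_right_le_deriv_boundary
    (f := Ψ) (f' := D) (a := 0) (b := 1)
    (fun t ht => (hderiv t ht).continuousAt.continuousWithinAt)
    (fun t ht => (hderiv t (Set.Ico_subset_Icc_self ht)).hasDerivWithinAt)
    (B := fun t => B * ‖h‖ ^ 3 / 3 * t ^ 3) (B' := fun t => B * ‖h‖ ^ 3 * t ^ 2)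
    (by simp [hΨ])
    (fun t => by
      have := (hasDerivAt_pow 3 t).const_mul (B * ‖h‖ ^ 3 / 3)
      exact this.congr_deriv (by ring))
    hbd
  have hfin := bound (right_mem_Icc.mpr zero_le_one)
  rw [show B / 3 * ‖h‖ ^ 3 = B * ‖h‖ ^ 3 / 3 * 1 ^ 3 by ring]
  simpa [hΨ, Real.norm_eq_abs] using hfin

end Analysis

/-- Deterministic core of Lemma 2 of the paper: if `f` is three times
continuously differentiable on the ball `B(x, r)` with third derivative bounded
in operator norm by `B` there, then for every `0 < c` with `c√n < r` the
average over all `ξ ∈ {-1,1}^n` of the SPSA estimate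
`[(f(x+cξ) − f(x−cξ))/(2c)]·ξ` differs from the gradient `∇f(x)` by at most
`(B n²/6) c²` in Euclidean norm; in particular the bias is `O(c²)`. -/
theorem spsa_estimate_bias_bound
    (n : ℕ) (f : EuclideanSpace ℝ (Fin n) → ℝ)
    (x : EuclideanSpace ℝ (Fin n)) (r B : ℝ) (hr : 0 < r)
    (hf : ContDiffOn ℝ 3 f (Metric.ball x r))
    (hB : ∀ y ∈ Metric.ball x r, ‖iteratedFDeriv ℝ 3 f y‖ ≤ B)
    (c : ℝ) (hc : 0 < c) (hcr : c * Real.sqrt n < r) :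
    ‖((2 : ℝ) ^ n)⁻¹ •
        (∑ ε : Fin n → Bool,
          ((f (x + c • pmE n ε) - f (x - c • pmE n ε)) / (2 * c)) • pmE n ε)
      - gradient f x‖ ≤ B * n ^ 2 / 6 * c ^ 2 := by
  have hgr : ∀ v : EuclideanSpace ℝ (Fin n),
      (inner ℝ (gradient f x) v : ℝ) = fderiv ℝ f x v := fun v => by
    rw [show gradient f x
        = (InnerProductSpace.toDual ℝ (EuclideanSpace ℝ (Fin n))).symm (fderiv ℝ f x) from rfl]
    exact InnerProductSpace.toDual_symm_apply
  have hcn : ∀ ε : Fin n → Bool, ‖c • pmE n ε‖ = c * Real.sqrt n := fun ε => by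
    rw [norm_smul, Real.norm_eq_abs, abs_of_pos hc, pmE_norm]
  -- the per-sign-pattern error
  set K₀ : ℝ := B / 3 * (c * Real.sqrt n) ^ 3 / (2 * c) with hK₀
  have herr : ∀ ε : Fin n → Bool,
      |(f (x + c • pmE n ε) - f (x - c • pmE n ε)) / (2 * c)
        - (inner ℝ (gradient f x) (pmE n ε) : ℝ)| ≤ K₀ := by
    intro ε
    have hcube := cube_bound f x r B hf hB (c • pmE n ε) (by rw [hcn]; exact hcr)
    rw [hcn] at hcube
    have heq : (f (x + c • pmE n ε) - f (x - c • pmE n ε)) / (2 * c)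
        - (inner ℝ (gradient f x) (pmE n ε) : ℝ)
        = (f (x + c • pmE n ε) - f (x - c • pmE n ε)
            - 2 * fderiv ℝ f x (c • pmE n ε)) / (2 * c) := by
      rw [hgr, map_smul, smul_eq_mul]
      field_simp
    rw [heq, abs_div, abs_of_pos (by positivity : (0:ℝ) < 2 * c)]
    rw [hK₀, div_le_div_iff_of_pos_right (by positivity)]
    exact hcube
  -- rewrite the difference using the reconstruction identity
  rw [show (((2 : ℝ) ^ n)⁻¹ •
        (∑ ε : Fin n → Bool,
          ((f (x + c • pmE n ε) - f (x - c • pmE n ε)) / (2 * c)) • pmE n ε)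
      - gradient f x)
      = ((2 : ℝ) ^ n)⁻¹ •
        (∑ ε : Fin n → Bool,
          (((f (x + c • pmE n ε) - f (x - c • pmE n ε)) / (2 * c)
            - (inner ℝ (gradient f x) (pmE n ε) : ℝ)) • pmE n ε)) from ?_]
  · -- norm bound
    rw [norm_smul, Real.norm_eq_abs, abs_of_pos (by positivity : (0:ℝ) < ((2:ℝ)^n)⁻¹)]
    have hsum : ‖∑ ε : Fin n → Bool,
        (((f (x + c • pmE n ε) - f (x - c • pmE n ε)) / (2 * c)
          - (inner ℝ (gradient f x) (pmE n ε) : ℝ)) • pmE n ε)‖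
        ≤ (2:ℝ)^n * (K₀ * Real.sqrt n) := by
      refine (norm_sum_le _ _).trans ?_
      have : ∀ ε : Fin n → Bool,
          ‖(((f (x + c • pmE n ε) - f (x - c • pmE n ε)) / (2 * c)
            - (inner ℝ (gradient f x) (pmE n ε) : ℝ)) • pmE n ε)‖ ≤ K₀ * Real.sqrt n := by
        intro ε
        rw [norm_smul, Real.norm_eq_abs, pmE_norm]
        exact mul_le_mul_of_nonneg_right (herr ε) (Real.sqrt_nonneg _)
      refine (Finset.sum_le_sum fun ε _ => this ε).trans ?_
      have hcard : (Fintype.card (Fin n → Bool)) = 2 ^ n := by simp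
      rw [Finset.sum_const, Finset.card_univ, hcard, nsmul_eq_mul]
      apply le_of_eq
      push_cast
      ring
    calc ((2:ℝ)^n)⁻¹ * ‖∑ ε : Fin n → Bool,
          (((f (x + c • pmE n ε) - f (x - c • pmE n ε)) / (2 * c)
            - (inner ℝ (gradient f x) (pmE n ε) : ℝ)) • pmE n ε)‖
        ≤ ((2:ℝ)^n)⁻¹ * ((2:ℝ)^n * (K₀ * Real.sqrt n)) :=
          mul_le_mul_of_nonneg_left hsum (by positivity)
      _ = K₀ * Real.sqrt n := by
          rw [← mul_assoc, inv_mul_cancel₀ (by positivity), one_mul]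
      _ = B * n ^ 2 / 6 * c ^ 2 := by
          have hsq : Real.sqrt n ^ 2 = (n:ℝ) := Real.sq_sqrt (by positivity)
          have h4 : Real.sqrt n ^ 4 = (n:ℝ) ^ 2 := by
            rw [show (4:ℕ) = 2 * 2 from rfl, pow_mul, hsq]
          have e1 : (c * Real.sqrt n) ^ 3 * Real.sqrt n = c ^ 3 * (n:ℝ) ^ 2 := by
            rw [mul_pow, mul_assoc, ← pow_succ, h4]
          have hc' : c ≠ 0 := ne_of_gt hc
          calc K₀ * Real.sqrt n = B / 3 * ((c * Real.sqrt n) ^ 3 * Real.sqrt n) / (2 * c) := by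
                rw [hK₀]; ring
            _ = B / 3 * (c ^ 3 * (n:ℝ) ^ 2) / (2 * c) := by rw [e1]
            _ = B * n ^ 2 / 6 * c ^ 2 := by field_simp; ring
  · -- algebraic rearrangement
    conv_lhs => rw [← avg_recon n (gradient f x)]
    rw [← smul_sub, ← Finset.sum_sub_distrib]
    congr 1
    exact Finset.sum_congr rfl fun ε _ => (sub_smul _ _ _).symm
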